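/- arXiv:1503.05852 — 9 statements merged into one kernel-verified Lean document; each statement's English description precedes it below -/
import Mathlib

section
/- The function G(c) = ∫₀^∞ (N(u)/D_c(u))·e^{-u} du is convex in c on (0, ∞). -/
open Real MeasureTheory

lemma conv_aux {K A B : ℝ} (hK : 0 ≤ K) (hA : 0 < A) (hB : 0 < B) :
    ConvexOn ℝ (Set.Ioi (0:ℝ)) (fun c => K / (A + c * B)) := by
  refine ⟨convex_Ioi 0, fun x hx y hy s t hs ht hst => ?_⟩
  simp only [smul_eq_mul] at *
  have hdx : 0 < A + x * B := by have := hx.out; positivity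
  have hdy : 0 < A + y * B := by have := hy.out; positivity
  have hdz : 0 < A + (s * x + t * y) * B := by
    have hz : 0 < s * x + t * y := by
      rcases hs.lt_or_eq with hs' | hs'
      · have := hx.out; have := hy.out; positivity
      · rw [← hs'] at hst ⊢; simp at hst ⊢; nlinarith [hy.out]
    positivity
  rw [div_le_iff₀ hdz, ← sub_nonneg]
  have ht' : t = 1 - s := by linarith
  subst ht'
  have expand : (s * (K / (A + x * B)) + (1 - s) * (K / (A + y * B))) *
        (A + (s * x + (1 - s) * y) * B) - K
      = s * (1 - s) * K * B^2 * (x - y)^2 / ((A + x * B) * (A + y * B)) := by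
    have h1 : A + B * x ≠ 0 := by rw [mul_comm]; exact hdx.ne'
    have h2 : A + B * y ≠ 0 := by rw [mul_comm]; exact hdy.ne'
    field_simp
    ring
  rw [expand]
  have h1s : (0:ℝ) ≤ 1 - s := ht
  positivity

set_option maxHeartbeats 1600000 in
/-- The function `G(c) = ∫₀^∞ (N(u)/D_c(u))·e^{-u} du` defining the combined hazard
ratio of two pooled proportional-hazards trials is convex in `c` on `(0,∞)`. -/
theorem combined_hazard_G_convexOn (a b p q : ℝ) (ha : 0 < a) (hab : a < b)
    (hp : p ∈ Set.Ioo (0 : ℝ) 1) (hq : q ∈ Set.Ioo (0 : ℝ) 1) :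
    ConvexOn ℝ (Set.Ioi (0 : ℝ)) (fun c : ℝ =>
      ∫ u in Set.Ioi (0 : ℝ),
        ((1 - q) * exp (-u) + p * q * a * exp (-(a * u)) + (1 - p) * q * b * exp (-(b * u))) /
          ((1 - q) * exp (-u) + p * q * c * exp (-(a * u)) + (1 - p) * q * c * exp (-(b * u))) *
          exp (-u)) := by
  obtain ⟨hp0, hp1⟩ := hp
  obtain ⟨hq0, hq1⟩ := hq
  have hb : 0 < b := ha.trans hab
  have hp1' : 0 < 1 - p := by linarith
  have hq1' : 0 < 1 - q := by linarith
  set N : ℝ → ℝ := fun u =>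
    (1 - q) * exp (-u) + p * q * a * exp (-(a * u)) + (1 - p) * q * b * exp (-(b * u)) with hNdef
  set A : ℝ → ℝ := fun u => (1 - q) * exp (-u) with hAdef
  set Bf : ℝ → ℝ := fun u => p * q * exp (-(a * u)) + (1 - p) * q * exp (-(b * u)) with hBdef
  set f : ℝ → ℝ → ℝ := fun c u => N u / (A u + c * Bf u) * exp (-u) with hfdef
  have heq : ∀ c u : ℝ,
      ((1 - q) * exp (-u) + p * q * a * exp (-(a * u)) + (1 - p) * q * b * exp (-(b * u))) /
          ((1 - q) * exp (-u) + p * q * c * exp (-(a * u)) + (1 - p) * q * c * exp (-(b * u))) *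
          exp (-u) = f c u := by
    intro c u
    simp only [hfdef, hNdef, hAdef, hBdef]
    ring_nf
  simp only [heq]
  have hNpos : ∀ u : ℝ, 0 ≤ N u := by intro u; simp only [hNdef]; positivity
  have hApos : ∀ u : ℝ, 0 < A u := by intro u; simp only [hAdef]; positivity
  have hBpos : ∀ u : ℝ, 0 < Bf u := by intro u; simp only [hBdef]; positivity
  have hDpos : ∀ c : ℝ, 0 < c → ∀ u : ℝ, 0 < A u + c * Bf u := by
    intro c hc u; have := hApos u; have := hBpos u; positivity
  -- pointwise convexity
  have hconv : ∀ u : ℝ, ConvexOn ℝ (Set.Ioi (0:ℝ)) (fun c => f c u) := by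
    intro u
    have h := conv_aux (K := N u * exp (-u)) (A := A u) (B := Bf u)
      (by have := hNpos u; positivity) (hApos u) (hBpos u)
    have : (fun c : ℝ => N u * exp (-u) / (A u + c * Bf u)) = fun c => f c u := by
      funext c; simp only [hfdef]; rw [div_mul_eq_mul_div]
    rwa [this] at h
  -- ratio bound
  have hbound : ∀ c : ℝ, 0 < c → ∀ u : ℝ, N u ≤ (1 + a / c + b / c) * (A u + c * Bf u) := by
    intro c hc u
    have e1 : 0 < exp (-u) := exp_pos _
    have e2 : 0 < exp (-(a * u)) := exp_pos _
    have e3 : 0 < exp (-(b * u)) := exp_pos _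
    simp only [hNdef, hAdef, hBdef]
    have h1 : p * q * a * exp (-(a * u)) = (a / c) * (c * (p * q * exp (-(a * u)))) := by
      field_simp
    have h2 : (1 - p) * q * b * exp (-(b * u))
        = (b / c) * (c * ((1 - p) * q * exp (-(b * u)))) := by
      field_simp
    nlinarith [mul_pos hc (mul_pos (mul_pos hp0 hq0) e2),
      mul_pos hc (mul_pos (mul_pos hp1' hq0) e3),
      mul_pos (div_pos ha hc) (mul_pos hc (mul_pos (mul_pos hp1' hq0) e3)),
      mul_pos (div_pos hb hc) (mul_pos hc (mul_pos (mul_pos hp0 hq0) e2)),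
      mul_pos (div_pos ha hc) (mul_pos hq1' e1),
      mul_pos (div_pos hb hc) (mul_pos hq1' e1)]
  -- integrability
  have hint : ∀ c : ℝ, 0 < c → IntegrableOn (fun u => f c u) (Set.Ioi (0:ℝ)) := by
    intro c hc
    have hCpos : 0 ≤ 1 + a / c + b / c := by positivity
    have hg : IntegrableOn (fun u : ℝ => (1 + a / c + b / c) * exp (-u)) (Set.Ioi (0:ℝ)) := by
      have h1 := exp_neg_integrableOn_Ioi (b := 1) 0 one_pos
      simp only [neg_mul, one_mul] at h1
      exact h1.const_mul _
    have hcexp : Continuous fun u : ℝ => exp (-u) := Real.continuous_exp.comp continuous_neg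
    have hca : Continuous fun u : ℝ => exp (-(a * u)) :=
      Real.continuous_exp.comp (continuous_const.mul continuous_id).neg
    have hcb : Continuous fun u : ℝ => exp (-(b * u)) :=
      Real.continuous_exp.comp (continuous_const.mul continuous_id).neg
    have hNc : Continuous N := ((continuous_const.mul hcexp).add
      (continuous_const.mul hca)).add (continuous_const.mul hcb)
    have hDc : Continuous fun u => A u + c * Bf u := (continuous_const.mul hcexp).add
      (continuous_const.mul ((continuous_const.mul hca).add (continuous_const.mul hcb)))
    have hcont : Continuous fun u => f c u :=
      (hNc.div hDc fun u => (hDpos c hc u).ne').mul hcexp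
    refine hg.mono' hcont.aestronglyMeasurable ?_
    refine Filter.Eventually.of_forall fun u => ?_
    have hD := hDpos c hc u
    have hfnn : 0 ≤ f c u := by
      have := hNpos u; have e1 : (0:ℝ) < exp (-u) := exp_pos _
      simp only [hfdef]; positivity
    rw [Real.norm_of_nonneg hfnn]
    simp only [hfdef]
    have hr : N u / (A u + c * Bf u) ≤ 1 + a / c + b / c :=
      (div_le_iff₀ hD).mpr (by linarith [hbound c hc u])
    exact mul_le_mul_of_nonneg_right hr (exp_pos _).le
  -- assemble
  refine ⟨convex_Ioi 0, fun x hx y hy s t hs ht hst => ?_⟩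
  have hz : s • x + t • y ∈ Set.Ioi (0:ℝ) := (convex_Ioi 0) hx hy hs ht hst
  simp only [smul_eq_mul] at hz ⊢
  calc ∫ u in Set.Ioi (0:ℝ), f (s * x + t * y) u
      ≤ ∫ u in Set.Ioi (0:ℝ), (s * f x u + t * f y u) := by
        refine integral_mono (hint _ hz) (((hint x hx).const_mul s).add
          ((hint y hy).const_mul t)) fun u => ?_
        have h := (hconv u).2 hx hy hs ht hst
        simpa using h
    _ = s * (∫ u in Set.Ioi (0:ℝ), f x u) + t * ∫ u in Set.Ioi (0:ℝ), f y u := by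
        rw [integral_add ((hint x hx).const_mul s) ((hint y hy).const_mul t),
          integral_const_mul, integral_const_mul]
end

section
/- G(a) > 1; that is, ∫₀^∞ [((1-q)e^{-u} + p·q·a·e^{-a·u} + (1-p)·q·b·e^{-b·u}) / ((1-q)e^{-u} + p·q·a·e^{-a·u} + (1-p)·q·a·e^{-b·u})]·e^{-u} du > 1. -/
open Real MeasureTheory

/-- `G(a) > 1`: evaluating the combined-hazard-ratio integral at `c = a` gives a value
strictly greater than `1`. -/
theorem combined_hazard_G_at_a_gt_one (a b p q : ℝ) (ha : 0 < a) (hab : a < b)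
    (hp : p ∈ Set.Ioo (0 : ℝ) 1) (hq : q ∈ Set.Ioo (0 : ℝ) 1) :
    1 < ∫ u in Set.Ioi (0 : ℝ),
        ((1 - q) * exp (-u) + p * q * a * exp (-(a * u)) + (1 - p) * q * b * exp (-(b * u))) /
          ((1 - q) * exp (-u) + p * q * a * exp (-(a * u)) + (1 - p) * q * a * exp (-(b * u))) *
          exp (-u) := by
  obtain ⟨hp0, hp1⟩ := hp
  obtain ⟨hq0, hq1⟩ := hq
  have hb : 0 < b := ha.trans hab
  have hq1' : 0 < 1 - q := by linarith
  have hp1' : 0 < 1 - p := by linarith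
  set D : ℝ → ℝ := fun u =>
    (1 - q) * exp (-u) + p * q * a * exp (-(a * u)) + (1 - p) * q * a * exp (-(b * u)) with hD
  have hDpos : ∀ u : ℝ, 0 < D u := fun u => by
    have h1 : 0 < (1 - q) * exp (-u) := by positivity
    have h2 : 0 < p * q * a * exp (-(a * u)) := by positivity
    have h3 : 0 < (1 - p) * q * a * exp (-(b * u)) := by positivity
    simp only [hD]; linarith
  set g : ℝ → ℝ := fun u =>
    (1 - p) * q * (b - a) * exp (-(b * u)) / D u * exp (-u) with hg
  have hgpos : ∀ u : ℝ, 0 < g u := fun u => by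
    have := hDpos u
    have hba : 0 < b - a := by linarith
    simp only [hg]; positivity
  have hDcont : Continuous D := by fun_prop
  have hgcont : Continuous g := by
    apply Continuous.mul _ (by fun_prop)
    exact Continuous.div (by fun_prop) hDcont fun u => (hDpos u).ne'
  -- bound : g u ≤ ((b-a)/a) * exp (-u)
  have hbound : ∀ u : ℝ, g u ≤ (b - a) / a * exp (-u) := fun u => by
    have hDu := hDpos u
    have hDge : (1 - p) * q * a * exp (-(b * u)) ≤ D u := by
      have h1 : 0 < (1 - q) * exp (-u) := by positivity
      have h2 : 0 < p * q * a * exp (-(a * u)) := by positivity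
      simp only [hD]; linarith
    have hfrac : (1 - p) * q * (b - a) * exp (-(b * u)) / D u ≤ (b - a) / a := by
      rw [div_le_div_iff₀ hDu ha]
      calc (1 - p) * q * (b - a) * exp (-(b * u)) * a
          = (b - a) * ((1 - p) * q * a * exp (-(b * u))) := by ring
        _ ≤ (b - a) * D u := by
            apply mul_le_mul_of_nonneg_left hDge (by linarith)
    simp only [hg]
    exact mul_le_mul_of_nonneg_right hfrac (exp_pos _).le
  have hgint : IntegrableOn g (Set.Ioi (0 : ℝ)) := by
    have hmaj : IntegrableOn (fun u => (b - a) / a * exp (-u)) (Set.Ioi (0 : ℝ)) := by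
      have := (exp_neg_integrableOn_Ioi 0 (zero_lt_one)).const_mul ((b - a) / a)
      simpa [IntegrableOn] using this
    refine Integrable.mono hmaj hgcont.aestronglyMeasurable ?_
    filter_upwards with u
    have hba : (0:ℝ) ≤ b - a := by linarith
    rw [Real.norm_eq_abs, Real.norm_eq_abs, abs_of_pos (hgpos u),
      abs_of_nonneg (by positivity)]
    exact hbound u
  have heint : IntegrableOn (fun u : ℝ => exp (-u)) (Set.Ioi (0 : ℝ)) := by
    simpa using exp_neg_integrableOn_Ioi 0 (zero_lt_one)
  have hsplit : ∀ u : ℝ,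
      ((1 - q) * exp (-u) + p * q * a * exp (-(a * u)) + (1 - p) * q * b * exp (-(b * u))) /
        D u * exp (-u) = exp (-u) + g u := fun u => by
    have hDu := (hDpos u).ne'
    simp only [hg, hD] at *
    field_simp
    ring
  rw [show (∫ u in Set.Ioi (0 : ℝ),
        ((1 - q) * exp (-u) + p * q * a * exp (-(a * u)) + (1 - p) * q * b * exp (-(b * u))) /
          ((1 - q) * exp (-u) + p * q * a * exp (-(a * u)) + (1 - p) * q * a * exp (-(b * u))) *
          exp (-u)) = ∫ u in Set.Ioi (0 : ℝ), (exp (-u) + g u) from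
    setIntegral_congr_fun measurableSet_Ioi fun u _ => hsplit u]
  rw [integral_add heint hgint, integral_exp_neg_Ioi_zero]
  have hpos : 0 < ∫ u in Set.Ioi (0 : ℝ), g u := by
    rw [setIntegral_pos_iff_support_of_nonneg_ae ?_ hgint]
    · have : Function.support g ∩ Set.Ioi (0 : ℝ) = Set.Ioi (0 : ℝ) := by
        apply Set.inter_eq_self_of_subset_right
        intro u _
        exact (hgpos u).ne'
      rw [this]
      simp
    · filter_upwards with u
      exact (hgpos u).le
  linarith
end

section
/- G(c_L) < 1 where c_L = p·a + (1-p)·b; that is, evaluating the integrand with c equal to the linear combination of the hazard ratios makes the integral strictly less than 1. The key pointwise fact is that N(u) - D_{c_L}(u) = p(1-p)q(a-b)(e^{-a·u} - e^{-b·u}) < 0 for all u > 0. -/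
open Real MeasureTheory

/-- `G(c_L) < 1` where `c_L = p·a + (1-p)·b`: evaluating the combined-hazard-ratio integral
at the linear hazard-ratio combination gives a value strictly less than `1`.  The key
pointwise fact is `N(u) - D_{c_L}(u) = p(1-p)q(a-b)(e^{-au} - e^{-bu}) < 0` for all `u > 0`. -/
theorem combined_hazard_G_at_linear_lt_one (a b p q : ℝ) (ha : 0 < a) (hab : a < b)
    (hp : p ∈ Set.Ioo (0 : ℝ) 1) (hq : q ∈ Set.Ioo (0 : ℝ) 1) :
    (∀ u : ℝ, 0 < u →
      ((1 - q) * exp (-u) + p * q * a * exp (-(a * u)) + (1 - p) * q * b * exp (-(b * u))) -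
        ((1 - q) * exp (-u) + p * q * (p * a + (1 - p) * b) * exp (-(a * u)) +
          (1 - p) * q * (p * a + (1 - p) * b) * exp (-(b * u)))
        = p * (1 - p) * q * (a - b) * (exp (-(a * u)) - exp (-(b * u))) ∧
      p * (1 - p) * q * (a - b) * (exp (-(a * u)) - exp (-(b * u))) < 0) ∧
    (∫ u in Set.Ioi (0 : ℝ),
        ((1 - q) * exp (-u) + p * q * a * exp (-(a * u)) + (1 - p) * q * b * exp (-(b * u))) /
          ((1 - q) * exp (-u) + p * q * (p * a + (1 - p) * b) * exp (-(a * u)) +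
            (1 - p) * q * (p * a + (1 - p) * b) * exp (-(b * u))) *
          exp (-u)) < 1 := by
  obtain ⟨hp0, hp1⟩ := hp
  obtain ⟨hq0, hq1⟩ := hq
  have hb : 0 < b := ha.trans hab
  set N : ℝ → ℝ := fun u =>
    (1 - q) * exp (-u) + p * q * a * exp (-(a * u)) + (1 - p) * q * b * exp (-(b * u)) with hN
  set D : ℝ → ℝ := fun u =>
    (1 - q) * exp (-u) + p * q * (p * a + (1 - p) * b) * exp (-(a * u)) +
      (1 - p) * q * (p * a + (1 - p) * b) * exp (-(b * u)) with hD
  have hcL : 0 < p * a + (1 - p) * b :=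
    add_pos (mul_pos hp0 ha) (mul_pos (by linarith) hb)
  have hDpos : ∀ u : ℝ, 0 < D u := fun u => by
    have h1 : 0 < (1 - q) * exp (-u) := mul_pos (by linarith) (exp_pos _)
    have h2 : 0 < p * q * (p * a + (1 - p) * b) * exp (-(a * u)) :=
      mul_pos (mul_pos (mul_pos hp0 hq0) hcL) (exp_pos _)
    have h3 : 0 < (1 - p) * q * (p * a + (1 - p) * b) * exp (-(b * u)) :=
      mul_pos (mul_pos (mul_pos (by linarith) hq0) hcL) (exp_pos _)
    simp only [hD]; linarith
  have key : ∀ u : ℝ, 0 < u → N u - D u =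
      p * (1 - p) * q * (a - b) * (exp (-(a * u)) - exp (-(b * u))) ∧
      p * (1 - p) * q * (a - b) * (exp (-(a * u)) - exp (-(b * u))) < 0 := by
    intro u hu
    constructor
    · simp only [hN, hD]; ring
    · have hexp : exp (-(b * u)) < exp (-(a * u)) := by
        apply exp_lt_exp.2; nlinarith
      have : 0 < p * (1 - p) * q * (b - a) * (exp (-(a * u)) - exp (-(b * u))) := by
        apply mul_pos (mul_pos (mul_pos (mul_pos hp0 (by linarith)) hq0) (by linarith))
        linarith
      nlinarith
  refine ⟨key, ?_⟩
  have hNlt : ∀ u : ℝ, 0 < u → N u < D u := fun u hu => by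
    obtain ⟨heq, hlt⟩ := key u hu
    have : N u - D u < 0 := heq ▸ hlt
    linarith
  have hNpos : ∀ u : ℝ, 0 < N u := fun u => by
    have h1 : 0 < (1 - q) * exp (-u) := mul_pos (by linarith) (exp_pos _)
    have h2 : 0 < p * q * a * exp (-(a * u)) :=
      mul_pos (mul_pos (mul_pos hp0 hq0) ha) (exp_pos _)
    have h3 : 0 < (1 - p) * q * b * exp (-(b * u)) :=
      mul_pos (mul_pos (mul_pos (by linarith) hq0) hb) (exp_pos _)
    simp only [hN]; linarith
  set f : ℝ → ℝ := fun u => N u / D u * exp (-u) with hf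
  -- f is continuous
  have hcontN : Continuous N := by
    simp only [hN]; fun_prop
  have hcontD : Continuous D := by
    simp only [hD]; fun_prop
  have hcont : Continuous f :=
    ((hcontN.div hcontD (fun u => (hDpos u).ne')).mul (by fun_prop))
  have hflt : ∀ u ∈ Set.Ioi (0:ℝ), f u < exp (-u) := by
    intro u hu
    have : N u / D u < 1 := (div_lt_one (hDpos u)).2 (hNlt u hu)
    calc f u = N u / D u * exp (-u) := rfl
      _ < 1 * exp (-u) := by
          exact mul_lt_mul_of_pos_right this (exp_pos _)
      _ = exp (-u) := one_mul _
  have hfnn : ∀ u : ℝ, 0 ≤ f u :=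
    fun u => mul_nonneg (div_nonneg (hNpos u).le (hDpos u).le) (exp_pos _).le
  have hexp_int : IntegrableOn (fun u => exp (-u)) (Set.Ioi (0:ℝ)) := by
    simpa using exp_neg_integrableOn_Ioi 0 one_pos
  have hf_int : IntegrableOn f (Set.Ioi (0:ℝ)) := by
    apply Integrable.mono hexp_int (hcont.aestronglyMeasurable.restrict)
    filter_upwards [ae_restrict_mem measurableSet_Ioi] with u hu
    rw [Real.norm_eq_abs, Real.norm_eq_abs, abs_of_nonneg (hfnn u),
      abs_of_nonneg (exp_pos _).le]
    exact (hflt u hu).le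
  have hdiff_pos : 0 < ∫ u in Set.Ioi (0:ℝ), (exp (-u) - f u) := by
    rw [setIntegral_pos_iff_support_of_nonneg_ae]
    · have hsub : Set.Ioi (0:ℝ) ⊆ Function.support (fun u => exp (-u) - f u) := by
        intro u hu
        simp only [Function.mem_support]
        exact (sub_pos.2 (hflt u hu)).ne'
      calc (0:ENNReal) < volume (Set.Ioi (0:ℝ)) := by simp
        _ = volume (Set.Ioi (0:ℝ) ∩ Set.Ioi 0) := by rw [Set.inter_self]
        _ ≤ volume (Function.support (fun u => exp (-u) - f u) ∩ Set.Ioi 0) := by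
            apply measure_mono; exact Set.inter_subset_inter_left _ hsub
    · filter_upwards [ae_restrict_mem measurableSet_Ioi] with u hu
      exact (sub_pos.2 (hflt u hu)).le
    · exact hexp_int.sub hf_int
  rw [integral_sub hexp_int hf_int, integral_exp_neg_Ioi_zero] at hdiff_pos
  linarith
end

section
/- There exists a unique c > 0 with G(c) = 1, and this solution lies in the open interval (a, p·a + (1-p)·b) ⊂ (a, b). -/
open Real MeasureTheory Set

noncomputable def chN (a b p q u : ℝ) : ℝ :=
  (1 - q) * exp (-u) + p * q * a * exp (-(a * u)) + (1 - p) * q * b * exp (-(b * u))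

noncomputable def chD (a b p q c u : ℝ) : ℝ :=
  (1 - q) * exp (-u) + p * q * c * exp (-(a * u)) + (1 - p) * q * c * exp (-(b * u))

noncomputable def chF (a b p q c u : ℝ) : ℝ := chN a b p q u / chD a b p q c u * exp (-u)

noncomputable def chG (a b p q c : ℝ) : ℝ := ∫ u in Set.Ioi (0:ℝ), chF a b p q c u

set_option linter.unusedSectionVars false
section Aux

variable {a b p q : ℝ} (ha : 0 < a) (hab : a < b)
  (hp : p ∈ Set.Ioo (0 : ℝ) 1) (hq : q ∈ Set.Ioo (0 : ℝ) 1)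

include ha hab hp hq

lemma chN_pos (u : ℝ) : 0 < chN a b p q u := by
  unfold chN
  have h1 : 0 < (1 - q) * exp (-u) := mul_pos (by linarith [hq.2]) (exp_pos _)
  have h2 : 0 < p * q * a * exp (-(a*u)) :=
    mul_pos (mul_pos (mul_pos hp.1 hq.1) ha) (exp_pos _)
  have h3 : 0 < (1 - p) * q * b * exp (-(b*u)) :=
    mul_pos (mul_pos (mul_pos (by linarith [hp.2]) hq.1) (by linarith)) (exp_pos _)
  linarith

lemma chD_pos {c : ℝ} (hc : 0 < c) (u : ℝ) : 0 < chD a b p q c u := by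
  unfold chD
  have h1 : 0 < (1 - q) * exp (-u) := mul_pos (by linarith [hq.2]) (exp_pos _)
  have h2 : 0 < p * q * c * exp (-(a*u)) :=
    mul_pos (mul_pos (mul_pos hp.1 hq.1) hc) (exp_pos _)
  have h3 : 0 < (1 - p) * q * c * exp (-(b*u)) :=
    mul_pos (mul_pos (mul_pos (by linarith [hp.2]) hq.1) hc) (exp_pos _)
  linarith

lemma chN_le (u : ℝ) {c : ℝ} (hc : 0 < c) :
    chN a b p q u ≤ (1 + a / c + b / c) * chD a b p q c u := by
  unfold chN chD
  have e1 := (exp_pos (-u)).le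
  have e2 := (exp_pos (-(a*u))).le
  have e3 := (exp_pos (-(b*u))).le
  have hac : a / c * c = a := div_mul_cancel₀ a hc.ne'
  have hbc : b / c * c = b := div_mul_cancel₀ b hc.ne'
  have h1q : (0:ℝ) ≤ 1 - q := by linarith [hq.2]
  have h1p : (0:ℝ) ≤ 1 - p := by linarith [hp.2]
  have hac' : 0 ≤ a / c := by positivity
  have hbc' : 0 ≤ b / c := div_nonneg (by linarith) hc.le
  nlinarith [mul_nonneg (mul_nonneg h1q hac') e1, mul_nonneg (mul_nonneg h1q hbc') e1,
    mul_nonneg (mul_nonneg (mul_nonneg (mul_nonneg hp.1.le hq.1.le) hc.le) hbc') e2,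
    mul_nonneg (mul_nonneg (mul_nonneg (mul_nonneg h1p hq.1.le) hc.le) hac') e3,
    mul_nonneg (mul_nonneg (mul_nonneg hp.1.le hq.1.le) hc.le) e2,
    mul_nonneg (mul_nonneg (mul_nonneg h1p hq.1.le) hc.le) e3]

lemma chF_cont {c : ℝ} (hc : 0 < c) : Continuous (chF a b p q c) := by
  unfold chF chN chD
  apply Continuous.mul _ (continuous_exp.comp continuous_neg)
  apply Continuous.div
  · fun_prop
  · fun_prop
  · intro u
    exact (chD_pos ha hab hp hq hc u).ne'

lemma chF_nonneg {c : ℝ} (hc : 0 < c) (u : ℝ) : 0 ≤ chF a b p q c u :=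
  mul_nonneg (div_nonneg (chN_pos ha hab hp hq u).le (chD_pos ha hab hp hq hc u).le)
    (exp_pos _).le

lemma chF_le {c : ℝ} (hc : 0 < c) (u : ℝ) :
    chF a b p q c u ≤ (1 + a / c + b / c) * exp (-u) := by
  unfold chF
  have hD := chD_pos ha hab hp hq hc u
  have := chN_le ha hab hp hq u hc
  have h : chN a b p q u / chD a b p q c u ≤ 1 + a / c + b / c :=
    (div_le_iff₀ hD).2 this
  exact mul_le_mul_of_nonneg_right h (exp_pos _).le

lemma chF_integrable {c : ℝ} (hc : 0 < c) :
    IntegrableOn (chF a b p q c) (Ioi 0) := by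
  have hbound : IntegrableOn (fun u => (1 + a / c + b / c) * exp (-u)) (Ioi (0:ℝ)) := by
    have := (exp_neg_integrableOn_Ioi (0:ℝ) one_pos)
    simp only [neg_mul, one_mul] at this
    exact this.const_mul _
  refine Integrable.mono hbound ((chF_cont ha hab hp hq hc).aestronglyMeasurable.restrict) ?_
  filter_upwards with u
  rw [Real.norm_eq_abs, Real.norm_eq_abs, abs_of_nonneg (chF_nonneg ha hab hp hq hc u),
    abs_of_nonneg (mul_nonneg (by
      have h1 := div_nonneg ha.le hc.le
      have h2 := div_nonneg (show (0:ℝ) ≤ b by linarith) hc.le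
      linarith) (exp_pos _).le)]
  exact chF_le ha hab hp hq hc u


end Aux

lemma int_strict_aux {f g : ℝ → ℝ} (hf : IntegrableOn f (Ioi 0)) (hg : IntegrableOn g (Ioi 0))
    (hlt : ∀ u ∈ Ioi (0:ℝ), f u < g u) :
    (∫ u in Ioi (0:ℝ), f u) < ∫ u in Ioi (0:ℝ), g u := by
  have hle : (∫ u in Ioi (0:ℝ), f u) ≤ ∫ u in Ioi (0:ℝ), g u :=
    setIntegral_mono_on hf hg measurableSet_Ioi (fun u hu => (hlt u hu).le)
  rcases hle.lt_or_eq with h | h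
  · exact h
  exfalso
  have h0 : (∫ u in Ioi (0:ℝ), (g u - f u)) = 0 := by
    rw [integral_sub hg hf, h, sub_self]
  have hnn : 0 ≤ᵐ[volume.restrict (Ioi 0)] fun u => g u - f u :=
    (ae_restrict_iff' measurableSet_Ioi).2
      (Filter.Eventually.of_forall fun u hu => sub_nonneg.2 (hlt u hu).le)
  have hz := (integral_eq_zero_iff_of_nonneg_ae hnn (hg.sub hf)).1 h0
  have hfalse : ∀ᵐ u ∂(volume.restrict (Ioi (0:ℝ))), False := by
    filter_upwards [hz, self_mem_ae_restrict measurableSet_Ioi] with u hu1 hu2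
    have := hlt u hu2
    simp only [Pi.zero_apply] at hu1
    linarith
  rw [ae_iff] at hfalse
  simp only [not_false_eq_true, setOf_true, Measure.restrict_apply_univ] at hfalse
  rw [Real.volume_Ioi] at hfalse
  exact (ENNReal.top_ne_zero) hfalse

section Main

variable {a b p q : ℝ} (ha : 0 < a) (hab : a < b)
  (hp : p ∈ Set.Ioo (0 : ℝ) 1) (hq : q ∈ Set.Ioo (0 : ℝ) 1)

include ha hab hp hq

lemma chD_strict_mono {c₁ c₂ : ℝ} (h : c₁ < c₂) (u : ℝ) :
    chD a b p q c₁ u < chD a b p q c₂ u := by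
  unfold chD
  have h2 : 0 < p * q * (c₂ - c₁) * exp (-(a*u)) :=
    mul_pos (mul_pos (mul_pos hp.1 hq.1) (by linarith)) (exp_pos _)
  have h3 : 0 < (1 - p) * q * (c₂ - c₁) * exp (-(b*u)) :=
    mul_pos (mul_pos (mul_pos (by linarith [hp.2]) hq.1) (by linarith)) (exp_pos _)
  nlinarith

lemma chG_anti {c₁ c₂ : ℝ} (hc₁ : 0 < c₁) (h : c₁ < c₂) :
    chG a b p q c₂ < chG a b p q c₁ := by
  have hc₂ : 0 < c₂ := lt_trans hc₁ h
  refine int_strict_aux (chF_integrable ha hab hp hq hc₂) (chF_integrable ha hab hp hq hc₁) ?_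
  intro u _
  unfold chF
  refine mul_lt_mul_of_pos_right ?_ (exp_pos _)
  exact div_lt_div_of_pos_left (chN_pos ha hab hp hq u) (chD_pos ha hab hp hq hc₁ u)
    (chD_strict_mono ha hab hp hq h u)

lemma chG_at_a : 1 < chG a b p q a := by
  have hint : IntegrableOn (fun u => exp (-u)) (Ioi (0:ℝ)) := by
    have := exp_neg_integrableOn_Ioi (0:ℝ) one_pos
    simpa only [neg_mul, one_mul] using this
  have h := int_strict_aux hint (chF_integrable ha hab hp hq ha) ?_
  · rwa [integral_exp_neg_Ioi_zero] at h
  intro u _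
  unfold chF
  have hD := chD_pos ha hab hp hq ha u
  have hlt : chD a b p q a u < chN a b p q u := by
    unfold chN chD
    have : 0 < (1 - p) * q * (b - a) * exp (-(b*u)) :=
      mul_pos (mul_pos (mul_pos (by linarith [hp.2]) hq.1) (by linarith)) (exp_pos _)
    nlinarith
  have h1 : 1 < chN a b p q u / chD a b p q a u := (one_lt_div hD).2 hlt
  calc exp (-u) = 1 * exp (-u) := (one_mul _).symm
    _ < _ := mul_lt_mul_of_pos_right h1 (exp_pos _)

lemma chG_at_m : chG a b p q (p * a + (1 - p) * b) < 1 := by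
  have hm : 0 < p * a + (1 - p) * b := by nlinarith [hp.1, hp.2]
  have hint : IntegrableOn (fun u => exp (-u)) (Ioi (0:ℝ)) := by
    have := exp_neg_integrableOn_Ioi (0:ℝ) one_pos
    simpa only [neg_mul, one_mul] using this
  have h := int_strict_aux (chF_integrable ha hab hp hq hm) hint ?_
  · rwa [integral_exp_neg_Ioi_zero] at h
  intro u hu
  unfold chF
  have hD := chD_pos ha hab hp hq hm u
  have hlt : chN a b p q u < chD a b p q (p * a + (1 - p) * b) u := by
    unfold chN chD
    have hexp : exp (-(b*u)) < exp (-(a*u)) := by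
      apply exp_lt_exp.2
      have : a * u < b * u := by
        exact mul_lt_mul_of_pos_right hab (by exact hu)
      linarith
    nlinarith [mul_pos (mul_pos (mul_pos (mul_pos hp.1 hq.1)
      (show (0:ℝ) < 1 - p by linarith [hp.2])) (show (0:ℝ) < b - a by linarith))
      (show (0:ℝ) < exp (-(a*u)) - exp (-(b*u)) by linarith)]
  have h1 : chN a b p q u / chD a b p q (p * a + (1 - p) * b) u < 1 := (div_lt_one hD).2 hlt
  calc chN a b p q u / chD a b p q (p * a + (1 - p) * b) u * exp (-u)
      < 1 * exp (-u) := mul_lt_mul_of_pos_right h1 (exp_pos _)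
    _ = exp (-u) := one_mul _

lemma chG_contAt {c₀ : ℝ} (hc : 0 < c₀) : ContinuousAt (chG a b p q) c₀ := by
  unfold chG
  have hev : ∀ᶠ c in nhds c₀, c₀ / 2 < c := eventually_gt_nhds (by linarith)
  apply continuousAt_of_dominated (bound := fun u => (1 + a / (c₀/2) + b / (c₀/2)) * exp (-u))
  · filter_upwards [hev] with c hc2
    exact (chF_cont ha hab hp hq (by linarith)).aestronglyMeasurable.restrict
  · filter_upwards [hev] with c hc2
    filter_upwards with u
    have hcpos : 0 < c := by linarith
    rw [Real.norm_eq_abs, abs_of_nonneg (chF_nonneg ha hab hp hq hcpos u)]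
    refine le_trans (chF_le ha hab hp hq hcpos u) ?_
    have h2 : (0:ℝ) < c₀ / 2 := by linarith
    have hb : (0:ℝ) < b := lt_trans ha hab
    have ha2 : a / c ≤ a / (c₀/2) := div_le_div_of_nonneg_left ha.le h2 hc2.le
    have hb2 : b / c ≤ b / (c₀/2) := div_le_div_of_nonneg_left hb.le h2 hc2.le
    have : (1 + a / c + b / c) ≤ (1 + a / (c₀/2) + b / (c₀/2)) := by linarith
    exact mul_le_mul_of_nonneg_right this (exp_pos _).le
  · have hint : IntegrableOn (fun u => exp (-u)) (Ioi (0:ℝ)) := by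
      have := exp_neg_integrableOn_Ioi (0:ℝ) one_pos
      simpa only [neg_mul, one_mul] using this
    exact hint.const_mul _
  · filter_upwards with u
    have hDc : Continuous (fun c => chD a b p q c u) := by unfold chD; fun_prop
    have hne : chD a b p q c₀ u ≠ 0 := (chD_pos ha hab hp hq hc u).ne'
    have : ContinuousAt (fun c => chN a b p q u / chD a b p q c u * exp (-u)) c₀ :=
      (ContinuousAt.div continuousAt_const hDc.continuousAt hne).mul continuousAt_const
    simpa only [chF] using this

end Main

/-- There exists a unique `c > 0` with `G(c) = 1`, and this solution lies in the open
interval `(a, p·a + (1-p)·b)`. -/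
theorem combined_hazard_exists_unique_root (a b p q : ℝ) (ha : 0 < a) (hab : a < b)
    (hp : p ∈ Set.Ioo (0 : ℝ) 1) (hq : q ∈ Set.Ioo (0 : ℝ) 1) :
    (∃! c : ℝ, 0 < c ∧
      (∫ u in Set.Ioi (0 : ℝ),
        ((1 - q) * exp (-u) + p * q * a * exp (-(a * u)) + (1 - p) * q * b * exp (-(b * u))) /
          ((1 - q) * exp (-u) + p * q * c * exp (-(a * u)) + (1 - p) * q * c * exp (-(b * u))) *
          exp (-u)) = 1) ∧
    (∀ c : ℝ, 0 < c →
      (∫ u in Set.Ioi (0 : ℝ),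
        ((1 - q) * exp (-u) + p * q * a * exp (-(a * u)) + (1 - p) * q * b * exp (-(b * u))) /
          ((1 - q) * exp (-u) + p * q * c * exp (-(a * u)) + (1 - p) * q * c * exp (-(b * u))) *
          exp (-u)) = 1 →
      c ∈ Set.Ioo a (p * a + (1 - p) * b)) := by
  have hrw : ∀ c : ℝ,
      (∫ u in Set.Ioi (0 : ℝ),
        ((1 - q) * exp (-u) + p * q * a * exp (-(a * u)) + (1 - p) * q * b * exp (-(b * u))) /
          ((1 - q) * exp (-u) + p * q * c * exp (-(a * u)) + (1 - p) * q * c * exp (-(b * u))) *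
          exp (-u)) = chG a b p q c := fun c => rfl
  simp only [hrw]
  have hm : a < p * a + (1 - p) * b := by nlinarith [hp.1, hp.2]
  have Ga := chG_at_a ha hab hp hq
  have Gm := chG_at_m ha hab hp hq
  -- all roots lie in (a, m)
  have hbd : ∀ c : ℝ, 0 < c → chG a b p q c = 1 → c ∈ Set.Ioo a (p * a + (1 - p) * b) := by
    intro c hc hc1
    constructor
    · by_contra h
      push_neg at h
      have hle : chG a b p q a ≤ chG a b p q c := by
        rcases h.lt_or_eq with h' | h'
        · exact (chG_anti ha hab hp hq hc h').le
        · rw [h']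
      linarith
    · by_contra h
      push_neg at h
      have hle : chG a b p q c ≤ chG a b p q (p * a + (1 - p) * b) := by
        rcases h.lt_or_eq with h' | h'
        · exact (chG_anti ha hab hp hq (by nlinarith [hp.1, hp.2]) h').le
        · rw [h']
      linarith
  refine ⟨?_, hbd⟩
  -- existence via IVT
  have hcontOn : ContinuousOn (chG a b p q) (Set.Icc a (p * a + (1 - p) * b)) := fun x hx =>
    (chG_contAt ha hab hp hq (lt_of_lt_of_le ha hx.1)).continuousWithinAt
  have hsub := intermediate_value_Ioo' hm.le hcontOn
  obtain ⟨c, hcmem, hceq⟩ := hsub ⟨Gm, Ga⟩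
  refine ⟨c, ⟨lt_trans ha hcmem.1, hceq⟩, ?_⟩
  rintro y ⟨hy0, hy1⟩
  rcases lt_trichotomy y c with h | h | h
  · have := chG_anti ha hab hp hq hy0 h
    rw [hy1, hceq] at this
    exact absurd this (lt_irrefl 1)
  · exact h
  · have := chG_anti ha hab hp hq (lt_trans ha hcmem.1) h
    rw [hy1, hceq] at this
    exact absurd this (lt_irrefl 1)
end

section
/- If c > 0 satisfies G(c) = 1, then a < c < p·a + (1-p)·b; in particular the combined hazard ratio c*_PL is strictly larger than the smaller trial hazard ratio a and strictly smaller than the linear hazard-ratio combination c_L = p·a + (1-p)·b (hence also smaller than b). -/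
open Real MeasureTheory

/-- If `c > 0` satisfies `G(c) = 1`, then `a < c < p·a + (1-p)·b`: the combined hazard
ratio is strictly larger than the smaller trial hazard ratio `a` and strictly smaller
than the linear hazard-ratio combination `c_L = p·a + (1-p)·b`. -/
theorem combined_hazard_root_between (a b p q c : ℝ) (ha : 0 < a) (hab : a < b)
    (hp : p ∈ Set.Ioo (0 : ℝ) 1) (hq : q ∈ Set.Ioo (0 : ℝ) 1) (hc : 0 < c)
    (hroot : (∫ u in Set.Ioi (0 : ℝ),
        ((1 - q) * exp (-u) + p * q * a * exp (-(a * u)) + (1 - p) * q * b * exp (-(b * u))) /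
          ((1 - q) * exp (-u) + p * q * c * exp (-(a * u)) + (1 - p) * q * c * exp (-(b * u))) *
          exp (-u)) = 1) :
    a < c ∧ c < p * a + (1 - p) * b := by
  obtain ⟨hp0, hp1⟩ := hp
  obtain ⟨hq0, hq1⟩ := hq
  set f : ℝ → ℝ := fun u =>
    ((1 - q) * exp (-u) + p * q * a * exp (-(a * u)) + (1 - p) * q * b * exp (-(b * u))) /
      ((1 - q) * exp (-u) + p * q * c * exp (-(a * u)) + (1 - p) * q * c * exp (-(b * u))) *
      exp (-u) with hf
  have hDpos : ∀ u : ℝ,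
      0 < (1 - q) * exp (-u) + p * q * c * exp (-(a * u)) + (1 - p) * q * c * exp (-(b * u)) := by
    intro u
    have t1 : 0 < (1 - q) * exp (-u) := mul_pos (by linarith) (exp_pos _)
    have t2 : 0 < p * q * c * exp (-(a*u)) := by
      have : 0 < p * q * c := by positivity
      exact mul_pos this (exp_pos _)
    have t3 : 0 < (1 - p) * q * c * exp (-(b*u)) := by
      have : 0 < (1 - p) * q * c := mul_pos (mul_pos (by linarith) hq0) hc
      exact mul_pos this (exp_pos _)
    linarith
  have hIntExp : IntegrableOn (fun u : ℝ => exp (-u)) (Set.Ioi 0) := by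
    simpa using exp_neg_integrableOn_Ioi (0 : ℝ) (one_pos)
  have hIntf : IntegrableOn f (Set.Ioi 0) := by
    by_contra h
    rw [integral_undef h] at hroot
    norm_num at hroot
  constructor
  · -- a < c
    by_contra h
    push_neg at h  -- c ≤ a
    -- pointwise: exp(-u) < f u on Ioi 0
    have hpt : ∀ u ∈ Set.Ioi (0 : ℝ), exp (-u) < f u := by
      intro u _
      have hD := hDpos u
      have e2 := exp_pos (-(a*u)); have e3 := exp_pos (-(b*u))
      have hND : (1 - q) * exp (-u) + p * q * c * exp (-(a * u)) + (1 - p) * q * c * exp (-(b * u)) <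
          (1 - q) * exp (-u) + p * q * a * exp (-(a * u)) + (1 - p) * q * b * exp (-(b * u)) := by
        have h1 : p * q * c * exp (-(a*u)) ≤ p * q * a * exp (-(a*u)) := by
          have : p * q * c ≤ p * q * a :=
            mul_le_mul_of_nonneg_left h (by positivity)
          exact mul_le_mul_of_nonneg_right this e2.le
        have h2 : (1 - p) * q * c * exp (-(b*u)) < (1 - p) * q * b * exp (-(b*u)) := by
          have hcb : c < b := lt_of_le_of_lt h hab
          have : (1 - p) * q * c < (1 - p) * q * b :=
            mul_lt_mul_of_pos_left hcb (mul_pos (by linarith) hq0)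
          exact mul_lt_mul_of_pos_right this e3
        linarith
      have : 1 < ((1 - q) * exp (-u) + p * q * a * exp (-(a * u)) + (1 - p) * q * b * exp (-(b * u))) /
          ((1 - q) * exp (-u) + p * q * c * exp (-(a * u)) + (1 - p) * q * c * exp (-(b * u))) :=
        (one_lt_div hD).mpr hND
      calc exp (-u) = 1 * exp (-u) := (one_mul _).symm
        _ < _ := by
          apply mul_lt_mul_of_pos_right this (exp_pos _)
    -- then ∫ f > 1
    have hsub : IntegrableOn (fun u => f u - exp (-u)) (Set.Ioi 0) := hIntf.sub hIntExp
    have hpos : 0 < ∫ u in Set.Ioi (0:ℝ), (f u - exp (-u)) := by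
      rw [setIntegral_pos_iff_support_of_nonneg_ae _ hsub]
      · have : Function.support (fun u => f u - exp (-u)) ∩ Set.Ioi 0 = Set.Ioi 0 := by
          apply Set.inter_eq_self_of_subset_right
          intro u hu
          exact ne_of_gt (sub_pos.mpr (hpt u hu))
        rw [this, Real.volume_Ioi]
        simp
      · filter_upwards [ae_restrict_mem measurableSet_Ioi] with u hu
        exact le_of_lt (sub_pos.mpr (hpt u hu))
    rw [integral_sub hIntf hIntExp, hroot, integral_exp_neg_Ioi_zero] at hpos
    linarith
  · -- c < p*a + (1-p)*b
    by_contra h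
    push_neg at h  -- p*a + (1-p)*b ≤ c
    have hpt : ∀ u ∈ Set.Ioi (0 : ℝ), f u < exp (-u) := by
      intro u hu
      have hu' : (0:ℝ) < u := hu
      have hD := hDpos u
      have e2 := exp_pos (-(a*u)); have e3 := exp_pos (-(b*u))
      have hE : exp (-(b*u)) < exp (-(a*u)) := by
        apply exp_lt_exp.mpr; nlinarith
      have hND : (1 - q) * exp (-u) + p * q * a * exp (-(a * u)) + (1 - p) * q * b * exp (-(b * u)) <
          (1 - q) * exp (-u) + p * q * c * exp (-(a * u)) + (1 - p) * q * c * exp (-(b * u)) := by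
        set K := p * q * (1 - p) * (b - a) with hK
        have hKpos : 0 < K := by
          have : 0 < p * q * (1 - p) := mul_pos (mul_pos hp0 hq0) (by linarith)
          exact mul_pos this (by linarith)
        have hA : K ≤ p * q * (c - a) := by
          have hca : (1 - p) * (b - a) ≤ c - a := by nlinarith
          calc K = p * q * ((1 - p) * (b - a)) := by ring
            _ ≤ p * q * (c - a) :=
              mul_le_mul_of_nonneg_left hca (by positivity)
        have hB : -K ≤ (1 - p) * q * (c - b) := by
          have hcb : -(p * (b - a)) ≤ c - b := by nlinarith
          calc -K = (1 - p) * q * (-(p * (b - a))) := by ring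
            _ ≤ (1 - p) * q * (c - b) :=
              mul_le_mul_of_nonneg_left hcb (mul_nonneg (by linarith) hq0.le)
        have hA' := mul_le_mul_of_nonneg_right hA e2.le
        have hB' := mul_le_mul_of_nonneg_right hB e3.le
        have hC : 0 < K * exp (-(a*u)) - K * exp (-(b*u)) := by
          have := mul_pos hKpos (sub_pos.mpr hE)
          nlinarith
        nlinarith
      have : ((1 - q) * exp (-u) + p * q * a * exp (-(a * u)) + (1 - p) * q * b * exp (-(b * u))) /
          ((1 - q) * exp (-u) + p * q * c * exp (-(a * u)) + (1 - p) * q * c * exp (-(b * u))) < 1 :=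
        (div_lt_one hD).mpr hND
      calc f u < 1 * exp (-u) := mul_lt_mul_of_pos_right this (exp_pos _)
        _ = exp (-u) := one_mul _
    have hsub : IntegrableOn (fun u => exp (-u) - f u) (Set.Ioi 0) := hIntExp.sub hIntf
    have hpos : 0 < ∫ u in Set.Ioi (0:ℝ), (exp (-u) - f u) := by
      rw [setIntegral_pos_iff_support_of_nonneg_ae _ hsub]
      · have : Function.support (fun u => exp (-u) - f u) ∩ Set.Ioi 0 = Set.Ioi 0 := by
          apply Set.inter_eq_self_of_subset_right
          intro u hu
          exact ne_of_gt (sub_pos.mpr (hpt u hu))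
        rw [this, Real.volume_Ioi]
        simp
      · filter_upwards [ae_restrict_mem measurableSet_Ioi] with u hu
        exact le_of_lt (sub_pos.mpr (hpt u hu))
    rw [integral_sub hIntExp hIntf, hroot, integral_exp_neg_Ioi_zero] at hpos
    linarith
end

section
/- For a < c < b and u > 0, the ratio N(u)/D_c(u) is strictly greater than 1 if and only if u < ln[(1-p)(b-c)/(p(c-a))]/(b-a), it equals 1 at u = ln[(1-p)(b-c)/(p(c-a))]/(b-a), and it is strictly less than 1 for larger u. Consequently the function g(u) = (N(u)/D_c(u))·e^{-u} crosses the standard exponential density e^{-u} at exactly one point. -/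
open Real

/-- For `a < c < b`, the ratio `N(u)/D_c(u)` is `> 1` exactly for
`u < u₀ = ln[(1-p)(b-c)/(p(c-a))]/(b-a)`, equals `1` at `u₀`, and is `< 1` beyond `u₀`;
hence `g(u) = (N(u)/D_c(u))·e^{-u}` crosses the standard exponential density `e^{-u}`
at exactly one point. -/
theorem combined_hazard_ratio_single_crossing (a b p q c : ℝ) (ha : 0 < a) (hab : a < b)
    (hp : p ∈ Set.Ioo (0 : ℝ) 1) (hq : q ∈ Set.Ioo (0 : ℝ) 1)
    (hac : a < c) (hcb : c < b) :
    ∀ u : ℝ, 0 < u →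
      (1 < ((1 - q) * exp (-u) + p * q * a * exp (-(a * u)) + (1 - p) * q * b * exp (-(b * u))) /
            ((1 - q) * exp (-u) + p * q * c * exp (-(a * u)) + (1 - p) * q * c * exp (-(b * u)))
        ↔ u < Real.log ((1 - p) * (b - c) / (p * (c - a))) / (b - a)) ∧
      (u = Real.log ((1 - p) * (b - c) / (p * (c - a))) / (b - a) →
        ((1 - q) * exp (-u) + p * q * a * exp (-(a * u)) + (1 - p) * q * b * exp (-(b * u))) /
          ((1 - q) * exp (-u) + p * q * c * exp (-(a * u)) + (1 - p) * q * c * exp (-(b * u)))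
          = 1) ∧
      (Real.log ((1 - p) * (b - c) / (p * (c - a))) / (b - a) < u →
        ((1 - q) * exp (-u) + p * q * a * exp (-(a * u)) + (1 - p) * q * b * exp (-(b * u))) /
          ((1 - q) * exp (-u) + p * q * c * exp (-(a * u)) + (1 - p) * q * c * exp (-(b * u)))
          < 1) := by
  obtain ⟨hp0, hp1⟩ := hp
  obtain ⟨hq0, hq1⟩ := hq
  have h1p : 0 < 1 - p := by linarith
  have h1q : 0 < 1 - q := by linarith
  have hba : 0 < b - a := by linarith
  have hca : 0 < c - a := by linarith
  have hbc : 0 < b - c := by linarith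
  have hc : 0 < c := lt_trans ha hac
  set K : ℝ := (1 - p) * (b - c) / (p * (c - a)) with hKdef
  set u₀ : ℝ := Real.log K / (b - a) with hu₀
  have hK : 0 < K := by positivity
  have hMK : p * (c - a) / ((1 - p) * (b - c)) = K⁻¹ := by
    rw [hKdef]; field_simp
  have hM : 0 < p * (c - a) / ((1 - p) * (b - c)) := by positivity
  -- main sign equivalence
  have hmain : ∀ v : ℝ, (p * (c - a) < (1 - p) * (b - c) * exp (-((b - a) * v)) ↔ v < u₀) := by
    intro v
    rw [← div_lt_iff₀' (by positivity), hMK, ← Real.log_lt_iff_lt_exp (by positivity),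
      Real.log_inv, hu₀, lt_div_iff₀ hba]
    constructor <;> intro h <;> nlinarith
  have hmain' : ∀ v : ℝ, ((1 - p) * (b - c) * exp (-((b - a) * v)) < p * (c - a) ↔ u₀ < v) := by
    intro v
    rw [← lt_div_iff₀' (by positivity), hMK, ← Real.lt_log_iff_exp_lt (by positivity),
      Real.log_inv, hu₀, div_lt_iff₀ hba]
    constructor <;> intro h <;> nlinarith
  have heq0 : (1 - p) * (b - c) * exp (-((b - a) * u₀)) = p * (c - a) := by
    have h1 : -((b - a) * u₀) = Real.log K⁻¹ := by
      rw [Real.log_inv, hu₀]; field_simp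
    rw [h1, Real.exp_log (by positivity), ← hMK]
    field_simp
  intro u hu
  have hDpos : 0 < (1 - q) * exp (-u) + p * q * c * exp (-(a * u)) +
      (1 - p) * q * c * exp (-(b * u)) := by positivity
  have hexpab : exp (-(a * u)) * exp (-((b - a) * u)) = exp (-(b * u)) := by
    rw [← Real.exp_add]; ring_nf
  have hdiff : ((1 - q) * exp (-u) + p * q * a * exp (-(a * u)) + (1 - p) * q * b * exp (-(b * u)))
      - ((1 - q) * exp (-u) + p * q * c * exp (-(a * u)) + (1 - p) * q * c * exp (-(b * u)))
      = q * exp (-(a * u)) * ((1 - p) * (b - c) * exp (-((b - a) * u)) - p * (c - a)) := by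
    have : exp (-(b * u)) = exp (-(a * u)) * exp (-((b - a) * u)) := hexpab.symm
    rw [this]; ring
  have hqe : 0 < q * exp (-(a * u)) := by positivity
  refine ⟨?_, ?_, ?_⟩
  · rw [one_lt_div hDpos, ← sub_pos, hdiff, ← hmain u]
    constructor <;> intro h <;> nlinarith
  · intro h
    rw [div_eq_one_iff_eq (ne_of_gt hDpos), ← sub_eq_zero, hdiff, h, heq0]
    ring
  · intro h
    rw [div_lt_one hDpos, ← sub_neg, hdiff]
    have := (hmain' u).mpr h
    nlinarith
end

section
/- Let c* ∈ (a, p·a + (1-p)·b) be the solution of G(c*) = ∫₀^∞ (N(u)/D_{c*}(u))·e^{-u} du = 1. Then for every H > 0, ∫₀^H (N(u)/D_{c*}(u))·e^{-u} du > 1 - e^{-H}. (The distribution with density (N(u)/D_{c*}(u))·e^{-u} is strictly stochastically smaller than the standard exponential distribution.) -/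
open Real MeasureTheory

lemma exp_neg_integrableOn_Ioi' (H : ℝ) :
    IntegrableOn (fun u : ℝ => exp (-u)) (Set.Ioi H) := by
  have := exp_neg_integrableOn_Ioi H (zero_lt_one)
  simpa using this

lemma key_crossing (f : ℝ → ℝ) (u0 : ℝ) (hu0 : 0 < u0)
    (hfi : IntegrableOn f (Set.Ioi 0))
    (hpos : ∀ u, 0 < u → u < u0 → exp (-u) < f u)
    (hneg : ∀ u, u0 < u → f u < exp (-u))
    (hint : ∫ u in Set.Ioi 0, f u = 1) :
    ∀ H, 0 < H → 1 - exp (-H) < ∫ u in Set.Ioc (0 : ℝ) H, f u := by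
  intro H hH
  have hei : ∀ K : ℝ, IntegrableOn (fun u : ℝ => exp (-u)) (Set.Ioi K) :=
    exp_neg_integrableOn_Ioi'
  have hsplit : ∀ g : ℝ → ℝ, IntegrableOn g (Set.Ioi 0) →
      (∫ u in Set.Ioi (0:ℝ), g u) =
        (∫ u in Set.Ioc (0:ℝ) H, g u) + ∫ u in Set.Ioi H, g u := by
    intro g hg
    rw [← setIntegral_union (Set.Ioc_disjoint_Ioi le_rfl) measurableSet_Ioi
        (hg.mono_set (fun x hx => Set.Ioc_subset_Ioi_self hx))
        (hg.mono_set (Set.Ioi_subset_Ioi hH.le)),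
      Set.Ioc_union_Ioi_eq_Ioi hH.le]
  have heIoc : (∫ u in Set.Ioc (0:ℝ) H, exp (-u)) = 1 - exp (-H) := by
    have h1 := hsplit (fun u => exp (-u)) (hei 0)
    rw [integral_exp_neg_Ioi_zero, integral_exp_neg_Ioi] at h1
    linarith
  have hfIoc : IntegrableOn f (Set.Ioc (0:ℝ) H) :=
    hfi.mono_set (fun x hx => Set.Ioc_subset_Ioi_self hx)
  rcases le_or_gt H u0 with hHu | hHu
  · -- H ≤ u0 : integrand strictly exceeds exp on (0,H)
    have hg : IntegrableOn (fun u => f u - exp (-u)) (Set.Ioc (0:ℝ) H) :=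
      hfIoc.sub ((hei 0).mono_set (fun x hx => Set.Ioc_subset_Ioi_self hx))
    have hne : ∀ᵐ u : ℝ, u ≠ u0 := by
      rw [ae_iff]
      have : {u : ℝ | ¬ u ≠ u0} = {u0} := by ext x; simp
      rw [this, Real.volume_singleton]
    have hae : (0 : ℝ → ℝ) ≤ᵐ[volume.restrict (Set.Ioc (0:ℝ) H)]
        fun u => f u - exp (-u) := by
      filter_upwards [ae_restrict_mem measurableSet_Ioc,
        hne.filter_mono (ae_mono Measure.restrict_le_self)] with u hu hu0'
      have hlt : u < u0 := lt_of_le_of_ne (hu.2.trans hHu) hu0'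
      have := hpos u hu.1 hlt
      simp only [Pi.zero_apply]
      linarith
    have hpos' : 0 < ∫ u in Set.Ioc (0:ℝ) H, (f u - exp (-u)) := by
      rw [setIntegral_pos_iff_support_of_nonneg_ae hae hg]
      have hsub : Set.Ioo (0:ℝ) H ⊆
          Function.support (fun u => f u - exp (-u)) ∩ Set.Ioc 0 H := by
        intro u hu
        refine ⟨?_, Set.Ioo_subset_Ioc_self hu⟩
        have := hpos u hu.1 (hu.2.trans_le hHu)
        simp only [Function.mem_support]
        intro h; rw [sub_eq_zero] at h; linarith
      calc (0:ENNReal) < volume (Set.Ioo (0:ℝ) H) := by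
            rw [Real.volume_Ioo]; simpa using hH
        _ ≤ _ := measure_mono hsub
    have hsub := integral_sub hfIoc
      ((hei 0).mono_set (fun x hx => Set.Ioc_subset_Ioi_self hx))
    rw [hsub, heIoc] at hpos'
    linarith
  · -- u0 < H : integrand strictly below exp on (H,∞)
    have hfIoi : IntegrableOn f (Set.Ioi H) := hfi.mono_set (Set.Ioi_subset_Ioi hH.le)
    have hg : IntegrableOn (fun u => exp (-u) - f u) (Set.Ioi H) := (hei H).sub hfIoi
    have hae : (0 : ℝ → ℝ) ≤ᵐ[volume.restrict (Set.Ioi H)]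
        fun u => exp (-u) - f u := by
      filter_upwards [ae_restrict_mem measurableSet_Ioi] with u hu
      have := hneg u (hHu.trans hu)
      simp only [Pi.zero_apply]
      linarith
    have hpos' : 0 < ∫ u in Set.Ioi H, (exp (-u) - f u) := by
      rw [setIntegral_pos_iff_support_of_nonneg_ae hae hg]
      have hsub : Set.Ioi H ⊆
          Function.support (fun u => exp (-u) - f u) ∩ Set.Ioi H := by
        intro u hu
        refine ⟨?_, hu⟩
        have := hneg u (hHu.trans hu)
        simp only [Function.mem_support]
        intro h; rw [sub_eq_zero] at h; linarith
      calc (0:ENNReal) < volume (Set.Ioi H) := by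
            rw [Real.volume_Ioi]; exact ENNReal.zero_lt_top
        _ ≤ _ := measure_mono hsub
    have heq := hsplit f hfi
    rw [hint] at heq
    have hsub := integral_sub (hei H) hfIoi
    rw [hsub, integral_exp_neg_Ioi] at hpos'
    linarith

set_option maxHeartbeats 1000000 in
/-- If `c* ∈ (a, p·a + (1-p)·b)` solves `G(c*) = 1`, then for every `H > 0` the partial
integral `∫₀^H (N(u)/D_{c*}(u))·e^{-u} du` strictly exceeds `1 - e^{-H}`: the distribution
with density `(N/D_{c*})·e^{-u}` is strictly stochastically smaller than the standard
exponential distribution. -/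
theorem combined_hazard_density_dominates_exponential (a b p q c : ℝ)
    (ha : 0 < a) (hab : a < b)
    (hp : p ∈ Set.Ioo (0 : ℝ) 1) (hq : q ∈ Set.Ioo (0 : ℝ) 1)
    (hc : c ∈ Set.Ioo a (p * a + (1 - p) * b))
    (hroot : (∫ u in Set.Ioi (0 : ℝ),
        ((1 - q) * exp (-u) + p * q * a * exp (-(a * u)) + (1 - p) * q * b * exp (-(b * u))) /
          ((1 - q) * exp (-u) + p * q * c * exp (-(a * u)) + (1 - p) * q * c * exp (-(b * u))) *
          exp (-u)) = 1) :
    ∀ H : ℝ, 0 < H →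
      1 - exp (-H) < ∫ u in Set.Ioc (0 : ℝ) H,
        ((1 - q) * exp (-u) + p * q * a * exp (-(a * u)) + (1 - p) * q * b * exp (-(b * u))) /
          ((1 - q) * exp (-u) + p * q * c * exp (-(a * u)) + (1 - p) * q * c * exp (-(b * u))) *
          exp (-u) := by
  obtain ⟨hp0, hp1⟩ := hp
  obtain ⟨hq0, hq1⟩ := hq
  obtain ⟨hca, hcb⟩ := hc
  have hb : 0 < b := ha.trans hab
  have hc0 : 0 < c := ha.trans hca
  have hcb' : c < b := by nlinarith
  set N : ℝ → ℝ := fun u =>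
    (1 - q) * exp (-u) + p * q * a * exp (-(a * u)) + (1 - p) * q * b * exp (-(b * u)) with hN
  set D : ℝ → ℝ := fun u =>
    (1 - q) * exp (-u) + p * q * c * exp (-(a * u)) + (1 - p) * q * c * exp (-(b * u)) with hD
  set f : ℝ → ℝ := fun u => N u / D u * exp (-u) with hf
  have hDpos : ∀ u, 0 < D u := by
    intro u
    have e1 := exp_pos (-u); have e2 := exp_pos (-(a*u)); have e3 := exp_pos (-(b*u))
    simp only [hD]
    have h1 : (0:ℝ) < 1 - q := by linarith
    have h2 : (0:ℝ) < 1 - p := by linarith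
    positivity
  have hNpos : ∀ u, 0 < N u := by
    intro u
    have e1 := exp_pos (-u); have e2 := exp_pos (-(a*u)); have e3 := exp_pos (-(b*u))
    simp only [hN]
    have h1 : (0:ℝ) < 1 - q := by linarith
    have h2 : (0:ℝ) < 1 - p := by linarith
    positivity
  set R : ℝ := (1 - p) * (b - c) / (p * (c - a)) with hR
  have hpca : (0:ℝ) < p * (c - a) := by nlinarith
  have hR1 : 1 < R := by
    rw [hR, lt_div_iff₀ hpca]
    nlinarith
  have hR0 : 0 < R := lt_trans zero_lt_one hR1
  set u0 : ℝ := Real.log R / (b - a) with hu0def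
  have hba : (0:ℝ) < b - a := by linarith
  have hu0 : 0 < u0 := div_pos (Real.log_pos hR1) hba
  have hkey : ∀ u : ℝ, N u - D u =
      q * ((1 - p) * (b - c) * exp (-(b * u)) - p * (c - a) * exp (-(a * u))) := by
    intro u; simp only [hN, hD]; ring
  have hmul : ∀ u : ℝ, exp ((b - a) * u) * exp (-(b * u)) = exp (-(a * u)) := by
    intro u; rw [← Real.exp_add]; ring_nf
  have hcmp1 : ∀ u : ℝ, exp ((b - a) * u) < R → D u < N u := by
    intro u h
    have heb := exp_pos (-(b*u))
    have h2 : p * (c - a) * exp ((b - a) * u) < (1 - p) * (b - c) := by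
      rw [hR, lt_div_iff₀ hpca] at h
      nlinarith
    have h3 : p * (c - a) * exp (-(a * u)) < (1 - p) * (b - c) * exp (-(b * u)) := by
      rw [← hmul u, ← mul_assoc]
      exact mul_lt_mul_of_pos_right h2 heb
    have := hkey u
    nlinarith
  have hcmp2 : ∀ u : ℝ, R < exp ((b - a) * u) → N u < D u := by
    intro u h
    have heb := exp_pos (-(b*u))
    have h2 : (1 - p) * (b - c) < p * (c - a) * exp ((b - a) * u) := by
      rw [hR, div_lt_iff₀ hpca] at h
      nlinarith
    have h3 : (1 - p) * (b - c) * exp (-(b * u)) < p * (c - a) * exp (-(a * u)) := by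
      rw [← hmul u, ← mul_assoc]
      exact mul_lt_mul_of_pos_right h2 heb
    have := hkey u
    nlinarith
  have hpos : ∀ u, 0 < u → u < u0 → exp (-u) < f u := by
    intro u _ hu
    have h1 : (b - a) * u < Real.log R := by
      rw [hu0def, lt_div_iff₀ hba] at hu
      linarith
    have h2 : exp ((b - a) * u) < R := by
      calc exp ((b - a) * u) < exp (Real.log R) := Real.exp_lt_exp.mpr h1
        _ = R := Real.exp_log hR0
    have h4 : 1 < N u / D u := (one_lt_div (hDpos u)).mpr (hcmp1 u h2)
    have he := exp_pos (-u)
    calc exp (-u) = 1 * exp (-u) := (one_mul _).symm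
      _ < N u / D u * exp (-u) := mul_lt_mul_of_pos_right h4 he
  have hneg : ∀ u, u0 < u → f u < exp (-u) := by
    intro u hu
    have h1 : Real.log R < (b - a) * u := by
      rw [hu0def, div_lt_iff₀ hba] at hu
      linarith
    have h2 : R < exp ((b - a) * u) := by
      calc R = exp (Real.log R) := (Real.exp_log hR0).symm
        _ < exp ((b - a) * u) := Real.exp_lt_exp.mpr h1
    have h5 : N u / D u < 1 := (div_lt_one (hDpos u)).mpr (hcmp2 u h2)
    have he := exp_pos (-u)
    calc N u / D u * exp (-u) < 1 * exp (-u) := mul_lt_mul_of_pos_right h5 he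
      _ = exp (-u) := one_mul _
  have hce : Continuous fun u : ℝ => exp (-u) := Real.continuous_exp.comp continuous_neg
  have hck : ∀ k : ℝ, Continuous fun u : ℝ => exp (-(k * u)) := fun k =>
    Real.continuous_exp.comp (continuous_neg.comp (continuous_const.mul continuous_id))
  have hNc : Continuous N := by
    simp only [hN]
    exact ((continuous_const.mul hce).add (continuous_const.mul (hck a))).add
      (continuous_const.mul (hck b))
  have hDc : Continuous D := by
    simp only [hD]
    exact ((continuous_const.mul hce).add (continuous_const.mul (hck a))).add
      (continuous_const.mul (hck b))
  have hfcont : Continuous f := (hNc.div hDc fun u => (hDpos u).ne').mul hce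
  have hfi : IntegrableOn f (Set.Ioi 0) := by
    have hbd : ∀ u : ℝ, ‖f u‖ ≤ b / c * exp (-u) := by
      intro u
      have e1 := exp_pos (-u); have e2 := exp_pos (-(a*u)); have e3 := exp_pos (-(b*u))
      have hbcc : b / c * c = b := div_mul_cancel₀ b hc0.ne'
      have hbc : 1 ≤ b / c := (one_le_div hc0).mpr hcb'.le
      have hND : N u ≤ b / c * D u := by
        simp only [hN, hD]
        have t1 : (1 - q) * exp (-u) ≤ b / c * ((1 - q) * exp (-u)) := by
          nlinarith [mul_nonneg (sub_nonneg.mpr hbc)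
            (mul_nonneg (by linarith : (0:ℝ) ≤ 1 - q) e1.le)]
        have h2' : b / c * (p * q * c * exp (-(a * u))) = p * q * b * exp (-(a * u)) := by
          rw [show b / c * (p * q * c * exp (-(a * u)))
              = p * q * (b / c * c) * exp (-(a * u)) by ring, hbcc]
        have t2 : p * q * a * exp (-(a * u)) ≤ b / c * (p * q * c * exp (-(a * u))) := by
          rw [h2']
          nlinarith [mul_nonneg (mul_nonneg (mul_nonneg hp0.le hq0.le)
            (sub_nonneg.mpr hab.le)) e2.le]
        have t3 : (1 - p) * q * b * exp (-(b * u)) ≤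
            b / c * ((1 - p) * q * c * exp (-(b * u))) := by
          rw [show b / c * ((1 - p) * q * c * exp (-(b * u)))
              = (1 - p) * q * (b / c * c) * exp (-(b * u)) by ring, hbcc]
        have hdistr : b / c * ((1 - q) * exp (-u) + p * q * c * exp (-(a * u)) +
              (1 - p) * q * c * exp (-(b * u)))
            = b / c * ((1 - q) * exp (-u)) + b / c * (p * q * c * exp (-(a * u))) +
              b / c * ((1 - p) * q * c * exp (-(b * u))) := by ring
        linarith [t1, t2, t3, hdistr]
      have hf0 : 0 ≤ f u := by
        have h := div_pos (hNpos u) (hDpos u)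
        have he := exp_pos (-u)
        simp only [hf]
        positivity
      rw [Real.norm_eq_abs, abs_of_nonneg hf0]
      have hdiv : N u / D u ≤ b / c := by
        rw [div_le_iff₀ (hDpos u)]
        calc N u ≤ b / c * D u := hND
          _ = b / c * D u := rfl
      calc f u = N u / D u * exp (-u) := rfl
        _ ≤ b / c * exp (-u) := mul_le_mul_of_nonneg_right hdiv e1.le
    exact Integrable.mono' ((exp_neg_integrableOn_Ioi' 0).const_mul (b/c))
      hfcont.aestronglyMeasurable.restrict (ae_of_all _ hbd)
  exact key_crossing f u0 hu0 hfi hpos hneg hroot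
end

section
/- Fix H > 0 and let c* ∈ (a, p·a + (1-p)·b) be the unique solution of ∫₀^∞ (N(u)/D_{c*}(u))·e^{-u} du = 1. If c' > 0 satisfies the censored estimating equation ∫₀^H (N(u)/D_{c'}(u))·e^{-u} du = 1 - e^{-H}, then c' > c*. (When the survival data from the two pooled trials are censored at a maximum trial length corresponding to cumulative baseline hazard H, the limit of the pooled maximum partial likelihood hazard-ratio estimator is strictly larger than the uncensored combined hazard ratio, i.e., it carries a positive bias.) -/
open Real MeasureTheory

open Set

set_option maxHeartbeats 1000000


noncomputable def chzN (a b p q : ℝ) (u : ℝ) : ℝ :=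
  (1 - q) * exp (-u) + p * q * a * exp (-(a * u)) + (1 - p) * q * b * exp (-(b * u))

noncomputable def chzD (a b p q c : ℝ) (u : ℝ) : ℝ :=
  (1 - q) * exp (-u) + p * q * c * exp (-(a * u)) + (1 - p) * q * c * exp (-(b * u))

lemma chzD_pos {a b p q c : ℝ} (hp : p ∈ Set.Ioo (0:ℝ) 1) (hq : q ∈ Set.Ioo (0:ℝ) 1)
    (hc : 0 < c) (u : ℝ) : 0 < chzD a b p q c u := by
  obtain ⟨hp0, hp1⟩ := hp; obtain ⟨hq0, hq1⟩ := hq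
  have h1 : (0:ℝ) < 1 - q := by linarith
  have h2 : (0:ℝ) < 1 - p := by linarith
  unfold chzD
  positivity

lemma chzN_pos {a b p q : ℝ} (ha : 0 < a) (hb : 0 < b)
    (hp : p ∈ Set.Ioo (0:ℝ) 1) (hq : q ∈ Set.Ioo (0:ℝ) 1) (u : ℝ) : 0 < chzN a b p q u := by
  obtain ⟨hp0, hp1⟩ := hp; obtain ⟨hq0, hq1⟩ := hq
  have h1 : (0:ℝ) < 1 - q := by linarith
  have h2 : (0:ℝ) < 1 - p := by linarith
  unfold chzN
  positivity

lemma chz_cont (a b p q c : ℝ) : Continuous (chzD a b p q c) := by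
  unfold chzD; fun_prop

lemma chz_integrable {a b p q c : ℝ} (ha : 0 < a) (hb : 0 < b)
    (hp : p ∈ Set.Ioo (0:ℝ) 1) (hq : q ∈ Set.Ioo (0:ℝ) 1) (hc : 0 < c) :
    IntegrableOn (fun u => chzN a b p q u / chzD a b p q c u * exp (-u)) (Set.Ioi 0) := by
  obtain ⟨hp0, hp1⟩ := hp; obtain ⟨hq0, hq1⟩ := hq
  have hD := fun u => chzD_pos (a:=a) (b:=b) ⟨hp0, hp1⟩ ⟨hq0, hq1⟩ hc u
  have hN := chzN_pos ha hb ⟨hp0, hp1⟩ ⟨hq0, hq1⟩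
  have hE : IntegrableOn (fun x : ℝ => exp (-x)) (Set.Ioi 0) := by
    simpa using exp_neg_integrableOn_Ioi (0:ℝ) one_pos
  refine ((hE.const_mul ((c+a+b)/c)).mono' ?_ ?_)
  · apply Continuous.aestronglyMeasurable
    apply Continuous.mul ?_ (by fun_prop)
    exact Continuous.div (by unfold chzN; fun_prop) (chz_cont a b p q c) fun u => (hD u).ne'
  · filter_upwards with u
    have h1 : chzN a b p q u / chzD a b p q c u ≤ (c+a+b)/c := by
      rw [div_le_div_iff₀ (hD u) hc]
      have h1 : (0:ℝ) < 1 - q := by linarith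
      have h2 : (0:ℝ) < 1 - p := by linarith
      have e1 := exp_pos (-u); have e2 := exp_pos (-(a*u)); have e3 := exp_pos (-(b*u))
      have t1 : 0 ≤ (a+b) * ((1-q) * exp (-u)) := by positivity
      have t2 : 0 ≤ p*q*c*(c+b) * exp (-(a*u)) := by positivity
      have t3 : 0 ≤ (1-p)*q*c*(c+a) * exp (-(b*u)) := by positivity
      unfold chzN chzD
      nlinarith [t1, t2, t3]
    have h0 : 0 ≤ chzN a b p q u / chzD a b p q c u * exp (-u) := by
      have := (hN u).le; have := (hD u).le; positivity
    rw [Real.norm_eq_abs, abs_of_nonneg h0]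
    exact mul_le_mul_of_nonneg_right h1 (exp_pos _).le

/-- Positive bias of the censored pooled MPLE: if `c*` is the uncensored combined hazard
ratio, solving `∫₀^∞ (N/D_{c*})·e^{-u} du = 1` with `c* ∈ (a, p·a+(1-p)·b)`, and `c' > 0`
solves the censored estimating equation `∫₀^H (N/D_{c'})·e^{-u} du = 1 - e^{-H}`, then
`c' > c*`. -/
theorem censored_combined_hazard_positive_bias (a b p q H c c' : ℝ)
    (ha : 0 < a) (hab : a < b)
    (hp : p ∈ Set.Ioo (0 : ℝ) 1) (hq : q ∈ Set.Ioo (0 : ℝ) 1) (hH : 0 < H)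
    (hc : c ∈ Set.Ioo a (p * a + (1 - p) * b))
    (hroot : (∫ u in Set.Ioi (0 : ℝ),
        ((1 - q) * exp (-u) + p * q * a * exp (-(a * u)) + (1 - p) * q * b * exp (-(b * u))) /
          ((1 - q) * exp (-u) + p * q * c * exp (-(a * u)) + (1 - p) * q * c * exp (-(b * u))) *
          exp (-u)) = 1)
    (hc' : 0 < c')
    (hroot' : (∫ u in Set.Ioc (0 : ℝ) H,
        ((1 - q) * exp (-u) + p * q * a * exp (-(a * u)) + (1 - p) * q * b * exp (-(b * u))) /
          ((1 - q) * exp (-u) + p * q * c' * exp (-(a * u)) + (1 - p) * q * c' * exp (-(b * u))) *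
          exp (-u)) = 1 - exp (-H)) :
    c < c' := by
  by_contra hlt
  push_neg at hlt
  -- hlt : c' ≤ c
  obtain ⟨hac, hcab⟩ := hc
  have hb : 0 < b := ha.trans hab
  have hcpos : 0 < c := ha.trans hac
  have hp0 := hp.1; have hp1 := hp.2; have hq0 := hq.1; have hq1 := hq.2
  have hcb : c < b := by nlinarith
  have hroot1 : (∫ u in Set.Ioi (0 : ℝ), chzN a b p q u / chzD a b p q c u * exp (-u)) = 1 :=
    hroot
  have hroot2 : (∫ u in Set.Ioc (0 : ℝ) H, chzN a b p q u / chzD a b p q c' u * exp (-u))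
      = 1 - exp (-H) := hroot'
  have hD := fun u => chzD_pos (a:=a) (b:=b) hp hq hcpos u
  have hD' := fun u => chzD_pos (a:=a) (b:=b) hp hq hc' u
  have hN := fun u => chzN_pos ha hb hp hq u
  have hIc : IntegrableOn (fun u => chzN a b p q u / chzD a b p q c u * exp (-u))
      (Set.Ioi 0) := chz_integrable ha hb hp hq hcpos
  have hIc' : IntegrableOn (fun u => chzN a b p q u / chzD a b p q c' u * exp (-u))
      (Set.Ioi 0) := chz_integrable ha hb hp hq hc'
  have hE : IntegrableOn (fun x : ℝ => exp (-x)) (Set.Ioi 0) := by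
    simpa using exp_neg_integrableOn_Ioi (0:ℝ) one_pos
  -- splitting the integral at H
  have hsplit : ∀ φ : ℝ → ℝ, IntegrableOn φ (Set.Ioi 0) →
      (∫ u in Set.Ioi (0:ℝ), φ u) = (∫ u in Set.Ioc (0:ℝ) H, φ u) + ∫ u in Set.Ioi H, φ u := by
    intro φ hφ
    rw [← setIntegral_union Ioc_disjoint_Ioi_same measurableSet_Ioi
        (hφ.mono_set Set.Ioc_subset_Ioi_self) (hφ.mono_set (Set.Ioi_subset_Ioi hH.le)),
      Set.Ioc_union_Ioi_eq_Ioi hH.le]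
  have hEIoc : (∫ u in Set.Ioc (0:ℝ) H, exp (-u)) = 1 - exp (-H) := by
    have := hsplit _ hE
    rw [integral_exp_neg_Ioi_zero, integral_exp_neg_Ioi] at this
    linarith
  -- single-crossing function
  set β : ℝ → ℝ := fun u => p * (a - c) + (1 - p) * (b - c) * exp (-((b - a) * u)) with hβ
  have hND : ∀ u, chzN a b p q u - chzD a b p q c u = q * exp (-(a*u)) * β u := by
    intro u
    have : exp (-(b*u)) = exp (-(a*u)) * exp (-((b-a)*u)) := by
      rw [← exp_add]; ring_nf
    unfold chzN chzD
    rw [this, hβ]; ring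
  have hβanti : ∀ u v : ℝ, u < v → β v < β u := by
    intro u v huv
    have : exp (-((b-a)*v)) < exp (-((b-a)*u)) := by
      apply exp_lt_exp.2; nlinarith
    have h2 : (0:ℝ) < (1 - p) * (b - c) := by nlinarith
    simp only [hβ]
    nlinarith
  -- sign of integrand difference
  have hgt : ∀ u, 0 < β u → exp (-u) < chzN a b p q u / chzD a b p q c u * exp (-u) := by
    intro u hu
    have h1 : chzD a b p q c u < chzN a b p q u := by
      have h2 : 0 < q * exp (-(a*u)) * β u := mul_pos (mul_pos hq0 (exp_pos _)) hu
      linarith [hND u]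
    have h3 : 1 < chzN a b p q u / chzD a b p q c u := (one_lt_div (hD u)).2 h1
    nlinarith [mul_pos (sub_pos.2 h3) (exp_pos (-u))]
  have hge : ∀ u, 0 ≤ β u → exp (-u) ≤ chzN a b p q u / chzD a b p q c u * exp (-u) := by
    intro u hu
    have h1 : chzD a b p q c u ≤ chzN a b p q u := by
      have h2 : 0 ≤ q * exp (-(a*u)) * β u :=
        mul_nonneg (mul_nonneg hq0.le (exp_pos _).le) hu
      linarith [hND u]
    have h3 : 1 ≤ chzN a b p q u / chzD a b p q c u := (one_le_div (hD u)).2 h1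
    nlinarith [mul_nonneg (sub_nonneg.2 h3) (exp_pos (-u)).le]
  have hlt2 : ∀ u, β u < 0 → chzN a b p q u / chzD a b p q c u * exp (-u) < exp (-u) := by
    intro u hu
    have h1 : chzN a b p q u < chzD a b p q c u := by
      have h2 : q * exp (-(a*u)) * β u < 0 :=
        mul_neg_of_pos_of_neg (mul_pos hq0 (exp_pos _)) hu
      linarith [hND u]
    have h3 : chzN a b p q u / chzD a b p q c u < 1 := (div_lt_one (hD u)).2 h1
    nlinarith [mul_pos (sub_pos.2 h3) (exp_pos (-u))]
  -- key strict inequality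
  have hkey : 1 - exp (-H) < ∫ u in Set.Ioc (0:ℝ) H, chzN a b p q u / chzD a b p q c u * exp (-u) := by
    rcases le_or_gt 0 (β H) with hβH | hβH
    · -- positive on (0,H)
      have hdiff : 0 < ∫ u in Set.Ioc (0:ℝ) H,
          (chzN a b p q u / chzD a b p q c u * exp (-u) - exp (-u)) := by
        rw [setIntegral_pos_iff_support_of_nonneg_ae]
        · refine lt_of_lt_of_le ?_ (measure_mono (?_ : Set.Ioo (0:ℝ) H ⊆ _))
          · rw [Real.volume_Ioo]; simpa using hH
          · intro u hu
            refine ⟨?_, Set.Ioo_subset_Ioc_self hu⟩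
            have : 0 < β u := lt_of_le_of_lt hβH (hβanti u H hu.2)
            have := hgt u this
            simp only [Function.mem_support]
            intro h; rw [sub_eq_zero] at h; linarith
        · filter_upwards [ae_restrict_mem measurableSet_Ioc] with u hu
          rcases eq_or_lt_of_le hu.2 with rfl | huH
          · simpa using hge u hβH
          · have : 0 < β u := lt_of_le_of_lt hβH (hβanti u H huH)
            simpa using (hgt u this).le
        · exact (hIc.mono_set Set.Ioc_subset_Ioi_self).sub (hE.mono_set Set.Ioc_subset_Ioi_self)
      rw [integral_sub (hIc.mono_set Set.Ioc_subset_Ioi_self)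
        (hE.mono_set Set.Ioc_subset_Ioi_self), hEIoc] at hdiff
      linarith
    · -- negative on (H,∞)
      have hdiff : 0 < ∫ u in Set.Ioi H,
          (exp (-u) - chzN a b p q u / chzD a b p q c u * exp (-u)) := by
        rw [setIntegral_pos_iff_support_of_nonneg_ae]
        · refine lt_of_lt_of_le ?_ (measure_mono (?_ : Set.Ioi H ⊆ _))
          · rw [Real.volume_Ioi]; exact ENNReal.zero_lt_top
          · intro u hu
            refine ⟨?_, hu⟩
            have : β u < 0 := lt_trans (hβanti H u hu) hβH
            have := hlt2 u this
            simp only [Function.mem_support]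
            intro h; rw [sub_eq_zero] at h; linarith
        · filter_upwards [ae_restrict_mem measurableSet_Ioi] with u hu
          have : β u < 0 := lt_trans (hβanti H u hu) hβH
          simpa using (hlt2 u this).le
        · exact (hE.mono_set (Set.Ioi_subset_Ioi hH.le)).sub
            (hIc.mono_set (Set.Ioi_subset_Ioi hH.le))
      rw [integral_sub (hE.mono_set (Set.Ioi_subset_Ioi hH.le))
        (hIc.mono_set (Set.Ioi_subset_Ioi hH.le)), integral_exp_neg_Ioi] at hdiff
      have := hsplit _ hIc
      rw [hroot1] at this
      linarith
  -- monotonicity in c'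
  have hmono : (∫ u in Set.Ioc (0:ℝ) H, chzN a b p q u / chzD a b p q c u * exp (-u))
      ≤ ∫ u in Set.Ioc (0:ℝ) H, chzN a b p q u / chzD a b p q c' u * exp (-u) := by
    apply setIntegral_mono_on (hIc.mono_set Set.Ioc_subset_Ioi_self)
      (hIc'.mono_set Set.Ioc_subset_Ioi_self) measurableSet_Ioc
    intro u _
    have hDD : chzD a b p q c' u ≤ chzD a b p q c u := by
      unfold chzD
      have e2 := (exp_pos (-(a*u))).le; have e3 := (exp_pos (-(b*u))).le
      have t1 : p * q * c' * exp (-(a*u)) ≤ p * q * c * exp (-(a*u)) := by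
        apply mul_le_mul_of_nonneg_right _ e2; nlinarith [mul_pos hp0 hq0]
      have t2 : (1-p) * q * c' * exp (-(b*u)) ≤ (1-p) * q * c * exp (-(b*u)) := by
        apply mul_le_mul_of_nonneg_right _ e3
        nlinarith [mul_pos (show (0:ℝ) < 1 - p by linarith) hq0]
      linarith
    apply mul_le_mul_of_nonneg_right _ (exp_pos _).le
    exact div_le_div_of_nonneg_left (hN u).le (hD' u) hDD
  rw [hroot2] at hmono
  linarith
end

section
/- Let 0 < a < b, a < 1, p ∈ (0,1), and c > a, and define h(t) = [p·a·e^{-a·t} + (1-p)·b·e^{-b·t} + e^{-t}] / [(p·e^{-a·t} + (1-p)·e^{-b·t})·c + e^{-t}]. Then there exists T > 0 such that h is strictly decreasing on [T, ∞); i.e., for sufficiently large t the limiting pooled Breslow baseline hazard is monotonically decreasing. -/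
open Real

/-- For `0 < a < b`, `a < 1`, `p ∈ (0,1)` and `c > a`, the limiting pooled Breslow
baseline hazard
`h(t) = [p·a·e^{-at} + (1-p)·b·e^{-bt} + e^{-t}] / [(p·e^{-at} + (1-p)·e^{-bt})·c + e^{-t}]`
is strictly decreasing on `[T, ∞)` for some `T > 0`. -/
theorem breslow_limit_eventually_strictAnti (a b p c : ℝ) (ha : 0 < a) (hab : a < b)
    (ha1 : a < 1) (hp : p ∈ Set.Ioo (0 : ℝ) 1) (hc : a < c) :
    ∃ T : ℝ, 0 < T ∧ StrictAntiOn
      (fun t : ℝ => (p * a * exp (-(a * t)) + (1 - p) * b * exp (-(b * t)) + exp (-t)) /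
        ((p * exp (-(a * t)) + (1 - p) * exp (-(b * t))) * c + exp (-t)))
      (Set.Ici T) := by
  obtain ⟨hp0, hp1⟩ := hp
  have hq : 0 < 1 - p := by linarith
  have hc0 : 0 < c := lt_trans ha hc
  set A : ℝ := c * p * (1 - p) * (a - b) ^ 2 with hA_def
  have hA : 0 < A := by
    have h1 : (0:ℝ) < (a - b) ^ 2 := by nlinarith
    rw [hA_def]
    exact mul_pos (mul_pos (mul_pos hc0 hp0) hq) h1
  set K : ℝ := (1 - p) * (1 - b) * (b - c) with hK_def
  -- D is positive everywhere
  have hD : ∀ t : ℝ, 0 < (p * exp (-(a * t)) + (1 - p) * exp (-(b * t))) * c + exp (-t) := by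
    intro t
    have h1 : 0 < p * exp (-(a * t)) := by positivity
    have h2 : 0 < (1 - p) * exp (-(b * t)) := by positivity
    have h3 : 0 < exp (-t) := exp_pos _
    nlinarith
  -- eventual domination: K * exp (-t) < A * exp (-(a*t)) for large t
  have htend : Filter.Tendsto (fun t : ℝ => K * exp ((a - 1) * t)) Filter.atTop (nhds 0) := by
    have h1 : Filter.Tendsto (fun t : ℝ => (1 - a) * t) Filter.atTop Filter.atTop :=
      Filter.Tendsto.const_mul_atTop (by linarith) Filter.tendsto_id
    have h2 : Filter.Tendsto (fun t : ℝ => exp (-((1 - a) * t))) Filter.atTop (nhds 0) :=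
      Real.tendsto_exp_neg_atTop_nhds_zero.comp h1
    have h3 : (fun t : ℝ => K * exp ((a - 1) * t)) = fun t : ℝ => K * exp (-((1 - a) * t)) := by
      funext t; ring_nf
    rw [h3]
    simpa using h2.const_mul K
  have hev : ∀ᶠ t in Filter.atTop, K * exp ((a - 1) * t) < A :=
    htend.eventually_lt_const hA
  obtain ⟨T₀, hT₀⟩ := Filter.eventually_atTop.1 hev
  refine ⟨max T₀ 1, lt_of_lt_of_le one_pos (le_max_right _ _), ?_⟩
  have key : ∀ t ∈ interior (Set.Ici (max T₀ 1)),
      deriv (fun t : ℝ => (p * a * exp (-(a * t)) + (1 - p) * b * exp (-(b * t)) + exp (-t)) /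
        ((p * exp (-(a * t)) + (1 - p) * exp (-(b * t))) * c + exp (-t))) t < 0 := by
    intro t ht
    rw [interior_Ici] at ht
    have htT : T₀ ≤ t := le_trans (le_max_left _ _) (le_of_lt ht)
    -- derivatives
    have hEa : HasDerivAt (fun x : ℝ => exp (-(a * x))) (exp (-(a * t)) * -(a * 1)) t :=
      (((hasDerivAt_id t).const_mul a).neg).exp
    have hEb : HasDerivAt (fun x : ℝ => exp (-(b * x))) (exp (-(b * t)) * -(b * 1)) t :=
      (((hasDerivAt_id t).const_mul b).neg).exp
    have hE1 : HasDerivAt (fun x : ℝ => exp (-x)) (exp (-t) * -1) t :=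
      ((hasDerivAt_id t).neg).exp
    have hN : HasDerivAt
        (fun x : ℝ => p * a * exp (-(a * x)) + (1 - p) * b * exp (-(b * x)) + exp (-x))
        (p * a * (exp (-(a * t)) * -(a * 1)) + (1 - p) * b * (exp (-(b * t)) * -(b * 1))
          + exp (-t) * -1) t :=
      ((hEa.const_mul (p * a)).add (hEb.const_mul ((1 - p) * b))).add hE1
    have hDd : HasDerivAt
        (fun x : ℝ => (p * exp (-(a * x)) + (1 - p) * exp (-(b * x))) * c + exp (-x))
        ((p * (exp (-(a * t)) * -(a * 1)) + (1 - p) * (exp (-(b * t)) * -(b * 1))) * c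
          + exp (-t) * -1) t :=
      (((hEa.const_mul p).add (hEb.const_mul (1 - p))).mul_const c).add hE1
    have hDne : ((p * exp (-(a * t)) + (1 - p) * exp (-(b * t))) * c + exp (-t)) ≠ 0 :=
      ne_of_gt (hD t)
    have hf : HasDerivAt
        (fun x : ℝ => (p * a * exp (-(a * x)) + (1 - p) * b * exp (-(b * x)) + exp (-x)) /
          ((p * exp (-(a * x)) + (1 - p) * exp (-(b * x))) * c + exp (-x))) _ t :=
      hN.div hDd hDne
    rw [hf.deriv]
    apply div_neg_of_neg_of_pos
    · -- numerator of derivative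
      set x := exp (-(a * t)) with hx
      set y := exp (-(b * t)) with hy
      set z := exp (-t) with hz
      have hxp : 0 < x := exp_pos _
      have hyp : 0 < y := exp_pos _
      have hzp : 0 < z := exp_pos _
      have hiden :
          (p * a * (x * -(a * 1)) + (1 - p) * b * (y * -(b * 1)) + z * -1) *
            ((p * x + (1 - p) * y) * c + z) -
          (p * a * x + (1 - p) * b * y + z) *
            ((p * (x * -(a * 1)) + (1 - p) * (y * -(b * 1))) * c + z * -1)
          = -A * (x * y) + p * (1 - a) * (a - c) * (x * z) + K * (y * z) := by
        simp only [hA_def, hK_def]; ring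
      rw [hiden]
      have hKz : K * z < A * x := by
        have h1 := hT₀ t htT
        have h2 : exp (-t) = exp (-(a * t)) * exp ((a - 1) * t) := by
          rw [← exp_add]; ring_nf
        calc K * z = K * exp ((a - 1) * t) * x := by rw [hz, h2, hx]; ring
          _ < A * x := by exact mul_lt_mul_of_pos_right h1 hxp
      have h2neg : p * (1 - a) * (a - c) * (x * z) < 0 := by
        have : p * (1 - a) * (a - c) < 0 := mul_neg_of_pos_of_neg (mul_pos hp0 (by linarith)) (by linarith)
        have hxz : 0 < x * z := mul_pos hxp hzp
        exact mul_neg_of_neg_of_pos this hxz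
      nlinarith [mul_lt_mul_of_pos_right hKz hyp]
    · exact pow_pos (hD t) 2
  have hcont : ContinuousOn
      (fun t : ℝ => (p * a * exp (-(a * t)) + (1 - p) * b * exp (-(b * t)) + exp (-t)) /
        ((p * exp (-(a * t)) + (1 - p) * exp (-(b * t))) * c + exp (-t)))
      (Set.Ici (max T₀ 1)) := by
    apply ContinuousOn.div
    · fun_prop
    · fun_prop
    · intro t _; exact ne_of_gt (hD t)
  exact strictAntiOn_of_deriv_neg (convex_Ici _) hcont key
end
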